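/- Let n ≥ 1, let σ_n denote the number of n²×n² Sudoku matrices, and let z_n denote the number of unordered families (sets) of n² pairwise disjoint S-permutation matrices of order n². Then z_n = σ_n / (n²)!, i.e., σ_n = (n²)! · z_n. -/

import Mathlib

/-- An `n²×n²` binary matrix, with rows indexed by `(block-row, offset)` and columns by
`(block-column, offset)`, is an S-permutation matrix if it is a permutation matrix
(exactly one `1` in every row and every column) and every `n×n` block contains exactly one `1`. -/
def IsSPermMatrix (n : ℕ) (A : Matrix (Fin n × Fin n) (Fin n × Fin n) Bool) : Prop :=
  (∀ r, ∃! c, A r c = true) ∧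
  (∀ c, ∃! r, A r c = true) ∧
  (∀ i j : Fin n, ∃! p : Fin n × Fin n, A (i, p.1) (j, p.2) = true)

/-- Two binary matrices are disjoint if there is no position where both have a `1`. -/
def MatDisjoint {α β : Type*} (A B : Matrix α β Bool) : Prop :=
  ∀ i j, ¬(A i j = true ∧ B i j = true)

/-- An `n²×n²` matrix with natural number entries is a Sudoku matrix if every row, every
column and every `n×n` block contains each of the numbers `1,…,n²` exactly once. -/
def IsSudoku (n : ℕ) (P : Matrix (Fin n × Fin n) (Fin n × Fin n) ℕ) : Prop :=
  (∀ r, ∀ v ∈ Finset.Icc 1 (n * n), ∃! c, P r c = v) ∧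
  (∀ c, ∀ v ∈ Finset.Icc 1 (n * n), ∃! r, P r c = v) ∧
  (∀ i j : Fin n, ∀ v ∈ Finset.Icc 1 (n * n), ∃! p : Fin n × Fin n, P (i, p.1) (j, p.2) = v)

/-- `π ∈ Π_n` iff in each row the first components form a permutation of `{1,…,n}` and in
each column the second components form a permutation of `{1,…,n}`. -/
def IsPiMatrix (n : ℕ) (π : Matrix (Fin n) (Fin n) (Fin n × Fin n)) : Prop :=
  (∀ i, Function.Bijective fun j => (π i j).1) ∧
  (∀ j, Function.Bijective fun i => (π i j).2)

/-- Two elements of `Π_n` are disjoint if they differ in every entry. -/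
def PiDisjoint {n : ℕ} (π π' : Matrix (Fin n) (Fin n) (Fin n × Fin n)) : Prop :=
  ∀ i j, π i j ≠ π' i j

/-- number of elements of `S` in row `i` -/
def rowCount {n : ℕ} (S : Finset (Fin n × Fin n)) (i : Fin n) : ℕ :=
  (S.filter fun p => p.1 = i).card

/-- number of elements of `S` in column `j` -/
def colCount {n : ℕ} (S : Finset (Fin n × Fin n)) (j : Fin n) : ℕ :=
  (S.filter fun p => p.2 = j).card

lemma sperm_unique_index {n : ℕ} (f : Fin (n*n) → Matrix (Fin n × Fin n) (Fin n × Fin n) Bool)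
    (h1 : ∀ v, IsSPermMatrix n (f v))
    (h2 : ∀ v w, v ≠ w → MatDisjoint (f v) (f w)) (r c : Fin n × Fin n) :
    ∃! v, f v r c = true := by
  classical
  choose g hg using fun v => ((h1 v).1 r).exists
  have hinj : Function.Injective g := by
    intro v w hvw
    by_contra hne
    exact h2 v w hne r (g v) ⟨hg v, hvw ▸ hg w⟩
  have hsurj : Function.Surjective g :=
    ((Fintype.bijective_iff_injective_and_card g).2 ⟨hinj, by simp⟩).2
  obtain ⟨v, hv⟩ := hsurj c
  refine ⟨v, hv ▸ hg v, fun w hw => ?_⟩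
  by_contra hne
  exact h2 w v hne r c ⟨hw, hv ▸ hg v⟩

lemma sudoku_mem {n : ℕ} {P : Matrix (Fin n × Fin n) (Fin n × Fin n) ℕ} (hP : IsSudoku n P)
    (r c : Fin n × Fin n) : P r c ∈ Finset.Icc 1 (n*n) := by
  classical
  choose g hg using fun v : (Finset.Icc 1 (n*n)) => (hP.1 r v.1 v.2).exists
  have hinj : Function.Injective g := by
    intro v w hvw
    have h2 := hg w
    rw [← hvw] at h2
    exact Subtype.ext ((hg v).symm.trans h2)
  have hsurj : Function.Surjective g :=
    ((Fintype.bijective_iff_injective_and_card g).2 ⟨hinj, by simp⟩).2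
  obtain ⟨v, hv⟩ := hsurj c
  have h3 := hg v
  rw [hv] at h3
  rw [h3]
  exact v.2

/-- the tuple type -/
def GoodTuple (n : ℕ) :=
  {f : Fin (n*n) → Matrix (Fin n × Fin n) (Fin n × Fin n) Bool //
    (∀ v, IsSPermMatrix n (f v)) ∧ ∀ v w, v ≠ w → MatDisjoint (f v) (f w)}

noncomputable def tupleToSudoku {n : ℕ} (f : GoodTuple n) :
    Matrix (Fin n × Fin n) (Fin n × Fin n) ℕ :=
  fun r c => (Classical.choose (sperm_unique_index f.1 f.2.1 f.2.2 r c).exists).val + 1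

lemma tupleToSudoku_eq_iff {n : ℕ} (f : GoodTuple n) (r c : Fin n × Fin n) (u : Fin (n*n)) :
    tupleToSudoku f r c = u.val + 1 ↔ f.1 u r c = true := by
  have huniq := sperm_unique_index f.1 f.2.1 f.2.2 r c
  have hspec := Classical.choose_spec huniq.exists
  constructor
  · intro h
    simp only [tupleToSudoku] at h
    have : Classical.choose huniq.exists = u := Fin.ext (by omega)
    rwa [this] at hspec
  · intro h
    have h1 := huniq.unique h hspec
    simp [tupleToSudoku, ← h1]

lemma tupleToSudoku_isSudoku {n : ℕ} (f : GoodTuple n) : IsSudoku n (tupleToSudoku f) := by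
  have key : ∀ (v : ℕ), v ∈ Finset.Icc 1 (n*n) → ∃ u : Fin (n*n), v = u.val + 1 := by
    intro v hv
    rw [Finset.mem_Icc] at hv
    exact ⟨⟨v - 1, by omega⟩, by simp; omega⟩
  refine ⟨fun r v hv => ?_, fun c v hv => ?_, fun i j v hv => ?_⟩
  · obtain ⟨u, rfl⟩ := key v hv
    exact (existsUnique_congr (fun c => tupleToSudoku_eq_iff f r c u)).2 ((f.2.1 u).1 r)
  · obtain ⟨u, rfl⟩ := key v hv
    exact (existsUnique_congr (fun r => tupleToSudoku_eq_iff f r c u)).2 ((f.2.1 u).2.1 c)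
  · obtain ⟨u, rfl⟩ := key v hv
    exact (existsUnique_congr (fun (p : Fin n × Fin n) => tupleToSudoku_eq_iff f (i, p.1) (j, p.2) u)).2
      ((f.2.1 u).2.2 i j)

def sudokuToTuple {n : ℕ} (P : {P : Matrix (Fin n × Fin n) (Fin n × Fin n) ℕ // IsSudoku n P}) :
    GoodTuple n :=
  ⟨fun v r c => decide (P.1 r c = v.val + 1), by
    constructor
    · intro v
      refine ⟨fun r => ?_, fun c => ?_, fun i j => ?_⟩
      · simpa [decide_eq_true_iff] using P.2.1 r (v.val + 1) (by simp [Finset.mem_Icc])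
      · simpa [decide_eq_true_iff] using P.2.2.1 c (v.val + 1) (by simp [Finset.mem_Icc])
      · simpa [decide_eq_true_iff] using P.2.2.2 i j (v.val + 1) (by simp [Finset.mem_Icc])
    · intro v w hvw r c ⟨ha, hb⟩
      simp only [decide_eq_true_eq] at ha hb
      exact hvw (Fin.ext (by omega))⟩

noncomputable def sudokuEquivTuple (n : ℕ) :
    {P : Matrix (Fin n × Fin n) (Fin n × Fin n) ℕ // IsSudoku n P} ≃ GoodTuple n where
  toFun := sudokuToTuple
  invFun f := ⟨tupleToSudoku f, tupleToSudoku_isSudoku f⟩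
  left_inv P := by
    apply Subtype.ext
    show tupleToSudoku (sudokuToTuple P) = P.1
    funext r c
    have hmem := sudoku_mem P.2 r c
    rw [Finset.mem_Icc] at hmem
    have h1 : P.1 r c = (⟨P.1 r c - 1, by omega⟩ : Fin (n*n)).val + 1 := by simp; omega
    rw [h1]
    exact (tupleToSudoku_eq_iff (sudokuToTuple P) r c _).2
      (show decide (P.1 r c = _ + 1) = true by rw [← h1]; simp)
  right_inv f := by
    apply Subtype.ext
    show (fun v r c => decide (tupleToSudoku f r c = v.val + 1)) = f.1
    funext v r c
    rw [show (f.1 v r c) = decide (f.1 v r c = true) by cases f.1 v r c <;> simp]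
    exact decide_eq_decide.mpr (tupleToSudoku_eq_iff f r c v)

abbrev FamType (n : ℕ) :=
  {F : Finset (Matrix (Fin n × Fin n) (Fin n × Fin n) Bool) //
    F.card = n * n ∧ (∀ A ∈ F, IsSPermMatrix n A) ∧
    ∀ A ∈ F, ∀ B ∈ F, A ≠ B → MatDisjoint A B}

lemma heq_helper {α : Type*} {k : ℕ} {s t : Finset α} (h : s = t)
    (e1 : Fin k ≃ {A // A ∈ s}) (e2 : Fin k ≃ {A // A ∈ t})
    (hv : ∀ v, (e1 v).1 = (e2 v).1) : HEq e1 e2 := by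
  subst h
  exact heq_of_eq (Equiv.ext fun v => Subtype.ext (hv v))

lemma tuple_inj {n : ℕ} (hn : 1 ≤ n) (f : GoodTuple n) : Function.Injective f.1 := by
  intro v w h
  by_contra hne
  have hd := f.2.2 v w hne
  obtain ⟨c, hc, -⟩ := (f.2.1 v).1 (⟨0, hn⟩, ⟨0, hn⟩)
  exact hd (⟨0, hn⟩, ⟨0, hn⟩) c ⟨hc, h ▸ hc⟩

noncomputable def tupleEquivSigma (n : ℕ) (hn : 1 ≤ n) :
    GoodTuple n ≃ Σ F : FamType n, Fin (n * n) ≃ {A // A ∈ F.1} := by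
  classical
  exact {
    toFun := fun f =>
      ⟨⟨Finset.image f.1 Finset.univ, by
          rw [Finset.card_image_of_injective _ (tuple_inj hn f)]
          simp, by
          intro A hA
          obtain ⟨v, -, rfl⟩ := Finset.mem_image.1 hA
          exact f.2.1 v, by
          intro A hA B hB hAB
          obtain ⟨v, -, rfl⟩ := Finset.mem_image.1 hA
          obtain ⟨w, -, rfl⟩ := Finset.mem_image.1 hB
          exact f.2.2 v w (fun h => hAB (by rw [h]))⟩,
        Equiv.ofBijective (fun v => ⟨f.1 v, Finset.mem_image_of_mem _ (Finset.mem_univ v)⟩)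
          ⟨fun v w h => tuple_inj hn f (congrArg Subtype.val h), by
            rintro ⟨A, hA⟩
            obtain ⟨v, -, rfl⟩ := Finset.mem_image.1 hA
            exact ⟨v, rfl⟩⟩⟩
    invFun := fun x =>
      ⟨fun v => (x.2 v).1, fun v => x.1.2.2.1 _ (x.2 v).2,
        fun v w hvw => x.1.2.2.2 _ (x.2 v).2 _ (x.2 w).2
          (fun h => (x.2.injective.ne hvw) (Subtype.ext h))⟩
    left_inv := fun f => by apply Subtype.ext; funext v; rfl
    right_inv := by
      rintro ⟨⟨F, pF⟩, e⟩
      have hF : Finset.image (fun v => (e v).1) Finset.univ = F := by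
        ext A
        simp only [Finset.mem_image, Finset.mem_univ, true_and]
        constructor
        · rintro ⟨v, rfl⟩; exact (e v).2
        · intro hA
          obtain ⟨v, hv⟩ := e.surjective ⟨A, hA⟩
          exact ⟨v, congrArg Subtype.val hv⟩
      exact Sigma.ext (Subtype.ext hF) (heq_helper hF _ e fun v => rfl) }

theorem main_count (n : ℕ) (hn : 1 ≤ n) :
    Nat.card (GoodTuple n) = (n * n).factorial * Nat.card (FamType n) := by
  classical
  rw [Nat.card_congr (tupleEquivSigma n hn)]
  haveI : Fintype (FamType n) := Fintype.ofFinite _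
  rw [Nat.card_eq_fintype_card, Fintype.card_sigma]
  have hc : ∀ F : FamType n, Fintype.card (Fin (n*n) ≃ {A // A ∈ F.1}) = (n*n).factorial := by
    intro F
    rw [Fintype.card_equiv (Finset.equivFinOfCardEq F.2.1).symm, Fintype.card_fin]
  rw [Finset.sum_congr rfl fun F _ => hc F, Finset.sum_const, Finset.card_univ, smul_eq_mul,
    Nat.card_eq_fintype_card, Nat.mul_comm]

theorem sudoku_count_eq_factorial_mul_families (n : ℕ) (hn : 1 ≤ n) :
    Nat.card {P : Matrix (Fin n × Fin n) (Fin n × Fin n) ℕ // IsSudoku n P} =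
      (n * n).factorial *
        Nat.card {F : Finset (Matrix (Fin n × Fin n) (Fin n × Fin n) Bool) //
          F.card = n * n ∧ (∀ A ∈ F, IsSPermMatrix n A) ∧
          ∀ A ∈ F, ∀ B ∈ F, A ≠ B → MatDisjoint A B} := by
  rw [Nat.card_congr (sudokuEquivTuple n)]
  exact main_count n hn
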